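/- Hölder-type smoothness of the suppressed kernel difference: if Φ is a nonnegative 1-Lipschitz function on ℂ and |x − x'| ≤ (1/2)|x − y|, then |k_Φ(x,y) − k_Φ(x',y)| ≤ 16 |x − x'| / |x − y|², where k_Φ(x,y) = conj(x−y)/(|x−y|² + Φ(x)Φ(y)). -/

import Mathlib

open Complex

set_option maxHeartbeats 2000000

/-- Hölder-type smoothness of the suppressed kernel: if `Φ` is a nonnegative 1-Lipschitz
function on `ℂ` and `|x − x'| ≤ (1/2)|x − y|`, then
`|k_Φ(x,y) − k_Φ(x',y)| ≤ 16 |x − x'| / |x − y|²`. -/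
theorem suppressed_kernel_smoothness
    (Φ : ℂ → ℝ) (hΦ0 : ∀ x, 0 ≤ Φ x)
    (hΦlip : ∀ x y : ℂ, |Φ x - Φ y| ≤ ‖x - y‖)
    (x x' y : ℂ) (hxy : y ≠ x) (hx'y : y ≠ x')
    (hclose : ‖x - x'‖ ≤ ‖x - y‖ / 2) :
    ‖(starRingEnd ℂ) (x - y) / ((‖x - y‖ ^ 2 + Φ x * Φ y : ℝ) : ℂ) -
         (starRingEnd ℂ) (x' - y) / ((‖x' - y‖ ^ 2 + Φ x' * Φ y : ℝ) : ℂ)‖ ≤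
      16 * ‖x - x'‖ / ‖x - y‖ ^ 2 := by
  set a := ‖x - y‖ with ha_def
  set a' := ‖x' - y‖ with ha'_def
  set t := ‖x - x'‖ with ht_def
  have hx_ne : x - y ≠ 0 := sub_ne_zero.mpr (Ne.symm hxy)
  have hx'_ne : x' - y ≠ 0 := sub_ne_zero.mpr (Ne.symm hx'y)
  have ha : 0 < a := norm_pos_iff.mpr hx_ne
  have ha' : 0 < a' := norm_pos_iff.mpr hx'_ne
  have ht : 0 ≤ t := norm_nonneg _
  have htri : a ≤ t + a' := by
    have h : x - y = (x - x') + (x' - y) := by ring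
    rw [ha_def, h]; exact norm_add_le _ _
  have htri' : a' ≤ a + t := by
    have h : x' - y = (x - y) + (x' - x) := by ring
    calc a' = ‖(x - y) + (x' - x)‖ := by rw [ha'_def, h]
    _ ≤ a + ‖x' - x‖ := norm_add_le _ _
    _ = a + t := by rw [norm_sub_rev]
  have ha2 : a / 2 ≤ a' := by linarith
  set D : ℝ := a ^ 2 + Φ x * Φ y with hD_def
  set D' : ℝ := a' ^ 2 + Φ x' * Φ y with hD'_def
  have hD : a ^ 2 ≤ D := le_add_of_nonneg_right (mul_nonneg (hΦ0 x) (hΦ0 y))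
  have hD' : a' ^ 2 ≤ D' := le_add_of_nonneg_right (mul_nonneg (hΦ0 x') (hΦ0 y))
  have hDpos : 0 < D := lt_of_lt_of_le (pow_pos ha 2) hD
  have hD'pos : 0 < D' := lt_of_lt_of_le (pow_pos ha' 2) hD'
  have hDne : ((D : ℝ) : ℂ) ≠ 0 := by exact_mod_cast hDpos.ne'
  have hD'ne : ((D' : ℝ) : ℂ) ≠ 0 := by exact_mod_cast hD'pos.ne'
  -- algebraic identity
  have hid : (starRingEnd ℂ) (x - y) / ((D : ℝ) : ℂ) -
      (starRingEnd ℂ) (x' - y) / ((D' : ℝ) : ℂ) =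
      (starRingEnd ℂ) (x - x') / ((D : ℝ) : ℂ) +
      (starRingEnd ℂ) (x' - y) * (((D' : ℝ) : ℂ) - ((D : ℝ) : ℂ)) /
        (((D : ℝ) : ℂ) * ((D' : ℝ) : ℂ)) := by
    rw [show x - x' = (x - y) - (x' - y) by ring, map_sub]
    field_simp
    simp only [map_sub, map_neg, map_add]
    ring
  -- triangle inequality estimate
  have hbound1 : ‖
      ((starRingEnd ℂ) (x - y) / ((D : ℝ) : ℂ) -
       (starRingEnd ℂ) (x' - y) / ((D' : ℝ) : ℂ))‖ ≤
      t / D + a' * |D' - D| / (D * D') := by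
    rw [hid]
    refine le_trans (norm_add_le _ _) ?_
    have e1 : ‖(starRingEnd ℂ) (x - x') / ((D : ℝ) : ℂ)‖ = t / D := by
      rw [norm_div, Complex.norm_conj, Complex.norm_real, Real.norm_eq_abs, abs_of_pos hDpos]
    have e2 : ‖(starRingEnd ℂ) (x' - y) * (((D' : ℝ) : ℂ) - ((D : ℝ) : ℂ)) /
        (((D : ℝ) : ℂ) * ((D' : ℝ) : ℂ))‖ = a' * |D' - D| / (D * D') := by
      rw [norm_div, norm_mul, norm_mul, Complex.norm_conj, Complex.norm_real, Real.norm_eq_abs,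
        Complex.norm_real, Real.norm_eq_abs, ← Complex.ofReal_sub, Complex.norm_real, Real.norm_eq_abs,
        abs_of_pos hDpos, abs_of_pos hD'pos]
    rw [e1, e2]
  -- bound on |D' - D|
  have hlip1 : |a - a'| ≤ t := by
    have h := abs_norm_sub_norm_le (x - y) (x' - y)
    simpa [ht_def, show (x - y) - (x' - y) = x - x' by ring] using h
  have hlip2 : |Φ x' - Φ x| ≤ t := by
    have h := hΦlip x' x
    rwa [norm_sub_rev] at h
  have hDdiff : |D' - D| ≤ t * (a + a' + Φ y) := by
    have h : D' - D = (a' - a) * (a' + a) + (Φ x' - Φ x) * Φ y := by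
      rw [hD_def, hD'_def]; ring
    rw [h]
    calc |(a' - a) * (a' + a) + (Φ x' - Φ x) * Φ y|
        ≤ |(a' - a) * (a' + a)| + |(Φ x' - Φ x) * Φ y| := abs_add_le _ _
      _ = |a' - a| * |a' + a| + |Φ x' - Φ x| * |Φ y| := by rw [abs_mul, abs_mul]
      _ ≤ t * (a' + a) + t * Φ y := by
          have h1 : |a' - a| ≤ t := by rwa [abs_sub_comm] at hlip1
          have h2 : |a' + a| = a' + a := abs_of_pos (by linarith)
          have h3 : |Φ y| = Φ y := abs_of_nonneg (hΦ0 y)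
          rw [h2, h3]
          have := hΦ0 y
          gcongr
      _ = t * (a + a' + Φ y) := by ring
  -- Lipschitz control of Φ y versus Φ x
  have hyx : |Φ y - Φ x| ≤ a := by
    have h := hΦlip y x
    rwa [norm_sub_rev] at h
  -- key real inequality
  have hkey : a' * |D' - D| / (D * D') ≤ 7 * t / a ^ 2 := by
    rw [div_le_div_iff₀ (by positivity) (by positivity)]
    have step1 : a' * |D' - D| * a ^ 2 ≤ a' * (t * (a + a' + Φ y)) * a ^ 2 := by
      gcongr
    refine step1.trans ?_
    have hmain : a' * (a + a' + Φ y) * a ^ 2 ≤ 7 * (D * D') := by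
      rcases le_or_gt (Φ y) (2 * a) with hc | hc
      · have hDD : a ^ 2 * a' ^ 2 ≤ D * D' := by
          have h1 := mul_nonneg (hΦ0 x) (hΦ0 y)
          have h2 := mul_nonneg (hΦ0 x') (hΦ0 y)
          calc a ^ 2 * a' ^ 2 ≤ D * a' ^ 2 := by nlinarith [sq_nonneg a']
            _ ≤ D * D' := by nlinarith
        have hS : a + a' + Φ y ≤ 7 * a' := by linarith
        calc a' * (a + a' + Φ y) * a ^ 2 ≤ a' * (7 * a') * a ^ 2 := by
              gcongr
          _ = 7 * (a ^ 2 * a' ^ 2) := by ring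
          _ ≤ 7 * (D * D') := by linarith
      · have hx2 : Φ y - a ≤ Φ x := by
          have h := abs_le.mp hyx
          linarith [h.1]
        have hK : 0 ≤ a ^ 2 + (Φ y - a) * Φ y := by nlinarith [hΦ0 y]
        have hDlb : a ^ 2 + (Φ y - a) * Φ y ≤ D := by
          have h : (Φ y - a) * Φ y ≤ Φ x * Φ y :=
            mul_le_mul_of_nonneg_right hx2 (hΦ0 y)
          linarith
        have hDD : (a ^ 2 + (Φ y - a) * Φ y) * a' ^ 2 ≤ D * D' := by
          calc (a ^ 2 + (Φ y - a) * Φ y) * a' ^ 2 ≤ D * a' ^ 2 := by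
                gcongr
            _ ≤ D * D' := by
                have := hDpos
                gcongr
        have hKlb : a ^ 2 ≤ 7 * (a ^ 2 + (Φ y - a) * Φ y) := by
          nlinarith [mul_nonneg (sub_nonneg.mpr (le_of_lt (lt_of_le_of_lt (by linarith : a ≤ 2 * a) hc))) (hΦ0 y)]
        have h3 : (a + a' + Φ y) * a ^ 2 ≤ 7 * (a ^ 2 + (Φ y - a) * Φ y) * a' := by
          nlinarith [mul_nonneg (by linarith : (0:ℝ) ≤ 7 * (a ^ 2 + (Φ y - a) * Φ y) - a ^ 2)
              (by linarith : (0:ℝ) ≤ a' - a / 2),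
            mul_nonneg ha.le (mul_nonneg (by linarith : (0:ℝ) ≤ Φ y - 2 * a) (hΦ0 y)),
            mul_nonneg (by linarith : (0:ℝ) ≤ Φ y - 2 * a) (hΦ0 y)]
        calc a' * (a + a' + Φ y) * a ^ 2 = (a + a' + Φ y) * a ^ 2 * a' := by ring
          _ ≤ 7 * (a ^ 2 + (Φ y - a) * Φ y) * a' * a' := by
              exact mul_le_mul_of_nonneg_right h3 ha'.le
          _ = 7 * ((a ^ 2 + (Φ y - a) * Φ y) * a' ^ 2) := by ring
          _ ≤ 7 * (D * D') := by linarith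
    calc a' * (t * (a + a' + Φ y)) * a ^ 2 = t * (a' * (a + a' + Φ y) * a ^ 2) := by ring
      _ ≤ t * (7 * (D * D')) := mul_le_mul_of_nonneg_left hmain ht
      _ = 7 * t * (D * D') := by ring
  have hterm0 : t / D ≤ t / a ^ 2 :=
    div_le_div_of_nonneg_left ht (pow_pos ha 2) hD
  calc ‖(starRingEnd ℂ) (x - y) / ((D : ℝ) : ℂ) - (starRingEnd ℂ) (x' - y) / ((D' : ℝ) : ℂ)‖ ≤ t / D + a' * |D' - D| / (D * D') := hbound1
    _ ≤ t / a ^ 2 + 7 * t / a ^ 2 := add_le_add hterm0 hkey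
    _ ≤ 16 * t / a ^ 2 := by
        rw [← add_div]
        gcongr
        linarith
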